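/- Lemma 3 (Cauchy property of the operator-splitting approximations): Fix t > 0, a measurable β : ℝ → ℝ, and φ ∈ L¹(ℝ × ℝ). Define ψ_t(x,ξ) = φ(x, ξ − β(x) t) and, for each positive integer m, z_m = (G(·, t/m) *ₓ)^m ψ_t, the m-fold partial convolution in the x-variable of the heat kernel at time t/m with ψ_t. Then (z_m)_{m ∈ ℕ} is a Cauchy sequence in L¹(ℝ × ℝ). -/

import Mathlib

open MeasureTheory

noncomputable section

/-- The fundamental solution (heat kernel) of the 1-D diffusion equation,
`G(x,t) = (4πDt)^{-1/2} exp(-x²/(4Dt))`. -/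
def heatKernel (D x t : ℝ) : ℝ :=
  (1 / Real.sqrt (4 * Real.pi * D * t)) * Real.exp (-(x ^ 2) / (4 * D * t))

/-- Partial convolution in the `x`-variable:
`(f *ₓ ψ)(x,ξ) = ∫_ℝ f(x-y) ψ(y,ξ) dy`. -/
def pconv (f : ℝ → ℝ) (ψ : ℝ × ℝ → ℝ) : ℝ × ℝ → ℝ :=
  fun p => ∫ y : ℝ, f (p.1 - y) * ψ (y, p.2)

/-- The operator-splitting approximation at time `t` with `m` steps:
`z_m = (G(·, t/m) *ₓ)^m ψ_t`, where `ψ_t(x,ξ) = φ(x, ξ - β(x) t)`. -/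
def zseq (D t : ℝ) (β : ℝ → ℝ) (φ : ℝ × ℝ → ℝ) (m : ℕ) : ℝ × ℝ → ℝ :=
  (pconv (fun x => heatKernel D x (t / m)))^[m]
    (fun p : ℝ × ℝ => φ (p.1, p.2 - β p.1 * t))

/-! ### Auxiliary lemmas -/

lemma heatKernel_eq (D t x : ℝ) :
    heatKernel D x t = (1 / Real.sqrt (4 * Real.pi * D * t)) *
      Real.exp (-(4 * D * t)⁻¹ * x ^ 2) := by
  unfold heatKernel
  rw [show -(x ^ 2) / (4 * D * t) = -(4 * D * t)⁻¹ * x ^ 2 by ring]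

lemma heatKernel_nonneg (D t x : ℝ) : 0 ≤ heatKernel D x t := by
  unfold heatKernel
  positivity

lemma heatKernel_le {D t : ℝ} (hD : 0 < D) (ht : 0 < t) (x : ℝ) :
    heatKernel D x t ≤ 1 / Real.sqrt (4 * Real.pi * D * t) := by
  unfold heatKernel
  have h1 : Real.exp (-(x ^ 2) / (4 * D * t)) ≤ 1 := by
    rw [Real.exp_le_one_iff, neg_div, neg_nonpos]
    positivity
  calc (1 / Real.sqrt (4 * Real.pi * D * t)) * Real.exp (-(x ^ 2) / (4 * D * t))
      ≤ (1 / Real.sqrt (4 * Real.pi * D * t)) * 1 :=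
        mul_le_mul_of_nonneg_left h1 (by positivity)
    _ = 1 / Real.sqrt (4 * Real.pi * D * t) := mul_one _

lemma heatKernel_integrable {D t : ℝ} (hD : 0 < D) (ht : 0 < t) :
    Integrable (fun x => heatKernel D x t) := by
  have : (fun x => heatKernel D x t)
      = fun x => (1 / Real.sqrt (4 * Real.pi * D * t)) * Real.exp (-(4 * D * t)⁻¹ * x ^ 2) :=
    funext fun x => heatKernel_eq D t x
  rw [this]
  exact (integrable_exp_neg_mul_sq (by positivity)).const_mul _

lemma heatKernel_continuous (D t : ℝ) : Continuous (fun x => heatKernel D x t) := by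
  unfold heatKernel
  fun_prop

lemma heatKernel_integrable_sub {D t : ℝ} (hD : 0 < D) (ht : 0 < t) (x : ℝ) :
    Integrable (fun y => heatKernel D (x - y) t) := by
  have h := (heatKernel_integrable hD ht).comp_sub_left x
  simpa using h

/-- Semigroup property of the heat kernel (convolution of Gaussians). -/
lemma heat_conv {D s r : ℝ} (hD : 0 < D) (hs : 0 < s) (hr : 0 < r) (x : ℝ) :
    (∫ y : ℝ, heatKernel D (x - y) s * heatKernel D y r) = heatKernel D x (s + r) := by
  have hπ := Real.pi_pos
  set a := (4 * D * s)⁻¹ with ha_def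
  set b := (4 * D * r)⁻¹ with hb_def
  have ha : 0 < a := by rw [ha_def]; positivity
  have hb : 0 < b := by rw [hb_def]; positivity
  have hab : 0 < a + b := by linarith
  set C : ℝ := 1 / Real.sqrt (4 * Real.pi * D * s) * (1 / Real.sqrt (4 * Real.pi * D * r)) *
      Real.exp (-(x ^ 2) / (4 * D * (s + r))) with hC_def
  have key : ∀ y : ℝ, heatKernel D (x - y) s * heatKernel D y r
      = C * Real.exp (-(a + b) * (y - a * x / (a + b)) ^ 2) := by
    intro y
    unfold heatKernel
    have hab' : a + b ≠ 0 := ne_of_gt hab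
    have hE : -((x - y) ^ 2) / (4 * D * s) + -(y ^ 2) / (4 * D * r)
        = -(x ^ 2) / (4 * D * (s + r)) + -(a + b) * (y - a * x / (a + b)) ^ 2 := by
      have hs4 : (4 * D * s) ≠ 0 := by positivity
      have hr4 : (4 * D * r) ≠ 0 := by positivity
      have hsr4 : (4 * D * (s + r)) ≠ 0 := by positivity
      rw [ha_def, hb_def] at *
      field_simp
      ring
    calc 1 / Real.sqrt (4 * Real.pi * D * s) * Real.exp (-((x - y) ^ 2) / (4 * D * s)) *
          (1 / Real.sqrt (4 * Real.pi * D * r) * Real.exp (-(y ^ 2) / (4 * D * r)))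
        = 1 / Real.sqrt (4 * Real.pi * D * s) * (1 / Real.sqrt (4 * Real.pi * D * r)) *
          Real.exp (-((x - y) ^ 2) / (4 * D * s) + -(y ^ 2) / (4 * D * r)) := by
          rw [Real.exp_add]; ring
      _ = 1 / Real.sqrt (4 * Real.pi * D * s) * (1 / Real.sqrt (4 * Real.pi * D * r)) *
          Real.exp (-(x ^ 2) / (4 * D * (s + r)) + -(a + b) * (y - a * x / (a + b)) ^ 2) := by
          rw [hE]
      _ = C * Real.exp (-(a + b) * (y - a * x / (a + b)) ^ 2) := by
          rw [hC_def, Real.exp_add]; ring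
  rw [integral_congr_ae (ae_of_all _ key), integral_const_mul]
  have h2 : (∫ y : ℝ, Real.exp (-(a + b) * (y - a * x / (a + b)) ^ 2))
      = Real.sqrt (Real.pi / (a + b)) := by
    rw [← integral_gaussian (a + b)]
    exact integral_sub_right_eq_self (fun y => Real.exp (-(a + b) * y ^ 2)) (a * x / (a + b))
  rw [h2, hC_def]
  unfold heatKernel
  have hsq : 1 / Real.sqrt (4 * Real.pi * D * s) * (1 / Real.sqrt (4 * Real.pi * D * r)) *
      Real.sqrt (Real.pi / (a + b)) = 1 / Real.sqrt (4 * Real.pi * D * (s + r)) := by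
    rw [one_div, one_div, one_div, ← Real.sqrt_inv, ← Real.sqrt_inv, ← Real.sqrt_inv,
      ← Real.sqrt_mul (by positivity), ← Real.sqrt_mul (by positivity)]
    congr 1
    have hab' : a + b ≠ 0 := ne_of_gt hab
    rw [ha_def, hb_def] at *
    have h1 : (4 * Real.pi * D * s) ≠ 0 := by positivity
    have h2 : (4 * Real.pi * D * r) ≠ 0 := by positivity
    have h3 : (4 * Real.pi * D * (s + r)) ≠ 0 := by positivity
    field_simp
    ring
  calc 1 / Real.sqrt (4 * Real.pi * D * s) * (1 / Real.sqrt (4 * Real.pi * D * r)) *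
        Real.exp (-(x ^ 2) / (4 * D * (s + r))) * Real.sqrt (Real.pi / (a + b))
      = 1 / Real.sqrt (4 * Real.pi * D * s) * (1 / Real.sqrt (4 * Real.pi * D * r)) *
        Real.sqrt (Real.pi / (a + b)) * Real.exp (-(x ^ 2) / (4 * D * (s + r))) := by ring
    _ = 1 / Real.sqrt (4 * Real.pi * D * (s + r)) * Real.exp (-(x ^ 2) / (4 * D * (s + r))) := by
        rw [hsq]

lemma conv_exists {D r : ℝ} (hD : 0 < D) (hr : 0 < r) {g : ℝ → ℝ} (hg : Integrable g) (x : ℝ) :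
    Integrable (fun z => heatKernel D (x - z) r * g z) := by
  apply hg.bdd_mul (c := 1 / Real.sqrt (4 * Real.pi * D * r))
  · exact ((heatKernel_continuous D r).comp
      (continuous_const.sub continuous_id)).aestronglyMeasurable
  · refine Filter.Eventually.of_forall fun z => ?_
    rw [Real.norm_eq_abs, abs_of_nonneg (heatKernel_nonneg _ _ _)]
    exact heatKernel_le hD hr _

/-- Convolving twice with heat kernels equals convolving once at the added time. -/
lemma conv_conv {D s r : ℝ} (hD : 0 < D) (hs : 0 < s) (hr : 0 < r) {g : ℝ → ℝ}
    (hg : Integrable g) (x : ℝ) :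
    (∫ y : ℝ, heatKernel D (x - y) s * ∫ z : ℝ, heatKernel D (y - z) r * g z)
      = ∫ z : ℝ, heatKernel D (x - z) (s + r) * g z := by
  set F : ℝ → ℝ → ℝ := fun y z => heatKernel D (x - y) s * (heatKernel D (y - z) r * g z)
    with hF_def
  have hFmeas : AEStronglyMeasurable (Function.uncurry F) (volume.prod volume) := by
    apply AEStronglyMeasurable.mul
    · exact (((heatKernel_continuous D s).comp
        (continuous_const.sub continuous_fst)).aestronglyMeasurable)
    apply AEStronglyMeasurable.mul
    · exact (((heatKernel_continuous D r).comp
        (continuous_fst.sub continuous_snd)).aestronglyMeasurable)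
    · exact hg.1.comp_snd
  have hslice : ∀ y : ℝ, Integrable (fun z => F y z) := fun y =>
    (conv_exists hD hr hg y).const_mul _
  set Ms : ℝ := 1 / Real.sqrt (4 * Real.pi * D * r) with hMs
  have hFint : Integrable (Function.uncurry F) (volume.prod volume) := by
    rw [integrable_prod_iff hFmeas]
    refine ⟨Filter.Eventually.of_forall hslice, ?_⟩
    have hbound : ∀ y : ℝ, ‖∫ z, ‖F y z‖‖ ≤ heatKernel D (x - y) s * (Ms * ∫ z, ‖g z‖) := by
      intro y
      rw [Real.norm_eq_abs, abs_of_nonneg (integral_nonneg fun z => norm_nonneg _)]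
      have h1 : ∀ z, ‖F y z‖ ≤ heatKernel D (x - y) s * (Ms * ‖g z‖) := by
        intro z
        rw [hF_def]
        simp only [Real.norm_eq_abs, abs_mul, abs_of_nonneg (heatKernel_nonneg _ _ _)]
        exact mul_le_mul_of_nonneg_left
          (mul_le_mul_of_nonneg_right (heatKernel_le hD hr _) (abs_nonneg _))
          (heatKernel_nonneg _ _ _)
      calc (∫ z, ‖F y z‖) ≤ ∫ z, heatKernel D (x - y) s * (Ms * ‖g z‖) :=
            integral_mono (hslice y).norm ((hg.norm.const_mul _).const_mul _) h1
        _ = heatKernel D (x - y) s * (Ms * ∫ z, ‖g z‖) := by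
            rw [integral_const_mul, integral_const_mul]
    apply Integrable.mono' ((heatKernel_integrable_sub hD hs x).mul_const (Ms * ∫ z, ‖g z‖))
      (hFmeas.norm.integral_prod_right')
      (Filter.Eventually.of_forall hbound)
  have hswap := integral_integral_swap hFint
  calc (∫ y : ℝ, heatKernel D (x - y) s * ∫ z : ℝ, heatKernel D (y - z) r * g z)
      = ∫ y : ℝ, ∫ z : ℝ, F y z := by
        refine integral_congr_ae (Filter.Eventually.of_forall fun y => ?_)
        rw [hF_def]
        exact (integral_const_mul _ _).symm
    _ = ∫ z : ℝ, ∫ y : ℝ, F y z := hswap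
    _ = ∫ z : ℝ, heatKernel D (x - z) (s + r) * g z := by
        refine integral_congr_ae (Filter.Eventually.of_forall fun z => ?_)
        show (∫ y : ℝ, heatKernel D (x - y) s * (heatKernel D (y - z) r * g z))
          = heatKernel D (x - z) (s + r) * g z
        have h3 : (∫ y : ℝ, heatKernel D (x - y) s * (heatKernel D (y - z) r * g z))
            = (∫ y : ℝ, heatKernel D (x - y) s * heatKernel D (y - z) r) * g z := by
          rw [← integral_mul_const]
          exact integral_congr_ae (Filter.Eventually.of_forall fun y => by ring)
        rw [h3]
        have h4 : (∫ y : ℝ, heatKernel D (x - y) s * heatKernel D (y - z) r)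
            = ∫ y : ℝ, heatKernel D ((x - z) - y) s * heatKernel D y r := by
          rw [← integral_sub_right_eq_self
            (fun y => heatKernel D ((x - z) - y) s * heatKernel D y r) z]
          refine integral_congr_ae (Filter.Eventually.of_forall fun y => ?_)
          simp only []
          rw [show x - z - (y - z) = x - y by ring]
        rw [h4, heat_conv hD hs hr (x - z)]

/-- The shear map is measure preserving. -/
lemma shear_measurePreserving {β : ℝ → ℝ} (hβ : Measurable β) (t : ℝ) :
    MeasurePreserving (fun p : ℝ × ℝ => (p.1, p.2 - β p.1 * t))
      (volume : Measure (ℝ × ℝ)) (volume : Measure (ℝ × ℝ)) := by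
  exact MeasurePreserving.skew_product (g := fun a c => c - β a * t)
    (MeasurePreserving.id volume)
    (show Measurable fun p : ℝ × ℝ => p.2 - β p.1 * t from
      measurable_snd.sub ((hβ.comp measurable_fst).mul_const t))
    (Filter.Eventually.of_forall fun a => by
      simp_rw [sub_eq_add_neg]
      exact map_add_right_eq_self volume _)

lemma psi_integrable {β : ℝ → ℝ} (hβ : Measurable β) (t : ℝ) {φ : ℝ × ℝ → ℝ}
    (hφ : Integrable φ) :
    Integrable (fun p : ℝ × ℝ => φ (p.1, p.2 - β p.1 * t)) := by
  exact ((shear_measurePreserving hβ t).integrable_comp hφ.1).2 hφ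

/-- For almost every ξ, the x-slice of the sheared initial datum is integrable. -/
lemma psi_slice_ae {β : ℝ → ℝ} (hβ : Measurable β) (t : ℝ) {φ : ℝ × ℝ → ℝ}
    (hφ : Integrable φ) :
    ∀ᵐ ξ : ℝ, Integrable (fun x => φ (x, ξ - β x * t)) := by
  have h : Integrable (fun p : ℝ × ℝ => φ (p.1, p.2 - β p.1 * t))
      ((volume : Measure ℝ).prod (volume : Measure ℝ)) := psi_integrable hβ t hφ
  exact h.prod_left_ae

/-- Key identity: the m-fold splitting iterate is the heat semigroup at time t,
independently of m. -/
lemma zseq_slice_eq {D t : ℝ} (hD : 0 < D) (ht : 0 < t) (β : ℝ → ℝ) (φ : ℝ × ℝ → ℝ)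
    {m : ℕ} (hm : 1 ≤ m) {ξ : ℝ}
    (hξ : Integrable (fun x => φ (x, ξ - β x * t))) (x : ℝ) :
    zseq D t β φ m (x, ξ)
      = ∫ z : ℝ, heatKernel D (x - z) t * φ (z, ξ - β z * t) := by
  set ψ : ℝ × ℝ → ℝ := fun p => φ (p.1, p.2 - β p.1 * t) with hψ
  have hs : (0:ℝ) < t / m := by
    apply div_pos ht
    exact_mod_cast Nat.pos_of_ne_zero (by omega)
  have key : ∀ k : ℕ, 1 ≤ k → ∀ x : ℝ,
      (pconv (fun x => heatKernel D x (t / m)))^[k] ψ (x, ξ)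
        = ∫ z : ℝ, heatKernel D (x - z) ((k : ℝ) * (t / m)) * ψ (z, ξ) := by
    intro k hk
    induction k, hk using Nat.le_induction with
    | base =>
      intro x
      simp only [Function.iterate_one, pconv, Nat.cast_one, one_mul]
    | succ k hk ih =>
      intro x
      rw [Function.iterate_succ_apply']
      have hks : (0:ℝ) < (k : ℝ) * (t / m) := by
        apply mul_pos _ hs
        exact_mod_cast Nat.pos_of_ne_zero (by omega)
      calc (pconv (fun x => heatKernel D x (t / m))
              ((pconv (fun x => heatKernel D x (t / m)))^[k] ψ)) (x, ξ)
          = ∫ y : ℝ, heatKernel D (x - y) (t / m) *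
              ((pconv (fun x => heatKernel D x (t / m)))^[k] ψ) (y, ξ) := rfl
        _ = ∫ y : ℝ, heatKernel D (x - y) (t / m) *
              ∫ z : ℝ, heatKernel D (y - z) ((k : ℝ) * (t / m)) * ψ (z, ξ) := by
            refine integral_congr_ae (Filter.Eventually.of_forall fun y => ?_)
            simp only [ih]
        _ = ∫ z : ℝ, heatKernel D (x - z) (t / m + (k : ℝ) * (t / m)) * ψ (z, ξ) :=
            conv_conv hD hs hks hξ x
        _ = ∫ z : ℝ, heatKernel D (x - z) (((k + 1 : ℕ) : ℝ) * (t / m)) * ψ (z, ξ) := by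
            rw [show (((k + 1 : ℕ) : ℝ)) * (t / m) = t / m + (k : ℝ) * (t / m) by
              push_cast; ring]
  have h := key m hm x
  have hmt : ((m : ℝ)) * (t / m) = t := by
    have hm0 : (m : ℝ) ≠ 0 := by exact_mod_cast Nat.pos_of_ne_zero (by omega) |>.ne'
    field_simp
  rw [hmt] at h
  exact h

/-- Lemma 3 (Cauchy property of the operator-splitting approximations): for `t > 0`,
measurable `β` and `φ ∈ L¹(ℝ × ℝ)`, the sequence `z_m = (G(·,t/m) *ₓ)^m ψ_t`
(over positive integers `m`) is a Cauchy sequence in `L¹(ℝ × ℝ)`. -/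
theorem lemma3_cauchy (D : ℝ) (hD : 0 < D) (t : ℝ) (ht : 0 < t)
    (β : ℝ → ℝ) (hβ : Measurable β) (φ : ℝ × ℝ → ℝ) (hφ : Integrable φ) :
    ∀ ε > (0:ℝ), ∃ N : ℕ, 1 ≤ N ∧ ∀ p : ℕ, N ≤ p → ∀ q : ℕ, N ≤ q →
      (∫ w : ℝ × ℝ, |zseq D t β φ p w - zseq D t β φ q w|) < ε := by
  intro ε hε
  refine ⟨1, le_refl 1, fun p hp q hq => ?_⟩
  have hslice := psi_slice_ae hβ t hφ
  have hae : ∀ᵐ w : ℝ × ℝ, Integrable (fun x => φ (x, w.2 - β x * t)) := by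
    have hnull : (volume : Measure ℝ) {ξ : ℝ | ¬ Integrable (fun x => φ (x, ξ - β x * t))} = 0 :=
      ae_iff.mp hslice
    have h2 : ∀ᵐ w : ℝ × ℝ ∂((volume : Measure ℝ).prod (volume : Measure ℝ)),
        Integrable (fun x => φ (x, w.2 - β x * t)) := by
      rw [ae_iff]
      apply measure_mono_null
        (show {w : ℝ × ℝ | ¬ Integrable (fun x => φ (x, w.2 - β x * t)) volume}
            ⊆ (Set.univ : Set ℝ) ×ˢ
              {ξ : ℝ | ¬ Integrable (fun x => φ (x, ξ - β x * t)) volume} from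
          fun w hw => ⟨trivial, hw⟩)
      rw [Measure.prod_prod, hnull, mul_zero]
    exact h2
  have hzero : ∀ᵐ w : ℝ × ℝ, |zseq D t β φ p w - zseq D t β φ q w| = 0 := by
    filter_upwards [hae] with w hw
    have h1 := zseq_slice_eq hD ht β φ hp hw w.1
    have h2 := zseq_slice_eq hD ht β φ hq hw w.1
    rw [show ((w.1, w.2) : ℝ × ℝ) = w from rfl] at h1 h2
    rw [h1, h2, sub_self, abs_zero]
  calc (∫ w : ℝ × ℝ, |zseq D t β φ p w - zseq D t β φ q w|)
      = ∫ _w : ℝ × ℝ, (0:ℝ) := integral_congr_ae hzero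
    _ = 0 := integral_zero _ _
    _ < ε := hε
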